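/- Let δ ∈ (0,1] and C > 0, and let E : ℕ → ℝ be a sequence with E 1 ≥ 0 such that for every k ≥ 1, E (k+1) ≤ (1 − δ η_k) E k + (η_k²/2) C, where η_k = 2/(δ(k−1)+2). Then for every k ≥ 1, E k ≤ 2 (C/δ + E 1) / (δ(k−1) + 2). -/

import Mathlib

open RealInnerProductSpace

theorem stmt16 (δ C : ℝ) (hδ0 : 0 < δ) (hδ1 : δ ≤ 1) (hC : 0 < C)
    (E : ℕ → ℝ) (hE1 : 0 ≤ E 1)
    (hrec : ∀ k : ℕ, 1 ≤ k →
      E (k + 1) ≤ (1 - δ * (2 / (δ * ((k:ℝ) - 1) + 2))) * E k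
        + ((2 / (δ * ((k:ℝ) - 1) + 2)) ^ 2 / 2) * C) :
    ∀ k : ℕ, 1 ≤ k → E k ≤ 2 * (C / δ + E 1) / (δ * ((k:ℝ) - 1) + 2) := by
  have hA : 0 ≤ C / δ + E 1 := by positivity
  have hCA : C ≤ δ * (C / δ + E 1) := by
    rw [mul_add, mul_div_cancel₀ _ (ne_of_gt hδ0)]
    nlinarith
  intro k hk
  induction k with
  | zero => omega
  | succ n ih =>
    rcases Nat.lt_or_ge n 1 with h1 | h1
    · interval_cases n
      push_cast
      rw [show δ * ((1:ℝ) - 1) + 2 = 2 by ring]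
      have h := div_pos hC hδ0
      linarith
    · have ihn := ih h1
      have H := hrec n h1
      set d : ℝ := δ * ((n:ℝ) - 1) + 2 with hddef
      have hn1 : (1:ℝ) ≤ (n:ℝ) := by exact_mod_cast h1
      have hd2 : 2 ≤ d := by nlinarith
      have hd0 : 0 < d := by linarith
      have hdd0 : 0 < d + δ := by linarith
      have hgoal : δ * (((n:ℕ) + 1 : ℝ) - 1) + 2 = d + δ := by
        rw [hddef]; ring
      have hcast : ((n + 1 : ℕ) : ℝ) = (n : ℝ) + 1 := by push_cast; ring
      rw [hcast, hgoal]
      have hnonneg : 0 ≤ 1 - δ * (2 / d) := by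
        rw [sub_nonneg, show δ * (2 / d) = 2 * δ / d by ring, div_le_one hd0]
        nlinarith
      have step1 : (1 - δ * (2 / d)) * E n ≤ (1 - δ * (2 / d)) * (2 * (C / δ + E 1) / d) :=
        mul_le_mul_of_nonneg_left ihn hnonneg
      have step2 : (1 - δ * (2 / d)) * (2 * (C / δ + E 1) / d) + ((2 / d) ^ 2 / 2) * C
          ≤ 2 * (C / δ + E 1) / (d + δ) := by
        have heq : (1 - δ * (2 / d)) * (2 * (C / δ + E 1) / d) + ((2 / d) ^ 2 / 2) * C
            = (2 * ((d - 2*δ) * (C / δ + E 1)) + 2 * C) / d ^ 2 := by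
          field_simp
        rw [heq, div_le_div_iff₀ (by positivity) hdd0]
        nlinarith [mul_nonneg hA (sq_nonneg δ),
          mul_le_mul_of_nonneg_right hCA (le_of_lt hdd0)]
      linarith
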